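/- arXiv:1206.0803 — 3 statements merged into one kernel-verified Lean document; each statement's English description precedes it below -/
import Mathlib

section
/- The ordinary generating function D(q,t,z) = sum_{n≥0} D_n(q,t) z^n for Dyck paths counted by area (q), rank (t), and order (z) satisfies the functional equation D(q,t,z) = 1 + z * D(q, 1/t, q t z) * D(q,t,z). -/
open Finset

def upCount {m : ℕ} (p : Fin m → Bool) (k : ℕ) : ℕ :=
  (Finset.univ.filter fun i : Fin m => (i : ℕ) < k ∧ p i = true).card

def downCount {m : ℕ} (p : Fin m → Bool) (k : ℕ) : ℕ :=
  (Finset.univ.filter fun i : Fin m => (i : ℕ) < k ∧ p i = false).card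

def IsDyck (n : ℕ) (p : Fin (2 * n) → Bool) : Prop :=
  upCount p (2 * n) = n ∧ ∀ k < 2 * n + 1, downCount p k ≤ upCount p k

instance (n : ℕ) : DecidablePred (IsDyck n) := fun p => by
  unfold IsDyck; infer_instance

def dyckSet (n : ℕ) : Finset (Fin (2 * n) → Bool) :=
  Finset.univ.filter (IsDyck n)

def height {n : ℕ} (p : Fin (2 * n) → Bool) (k : ℕ) : ℕ :=
  upCount p k - downCount p k

def area {n : ℕ} (p : Fin (2 * n) → Bool) : ℕ :=
  ∑ k ∈ Finset.range (2 * n + 1), height p k / 2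

def stepAt {m : ℕ} (p : Fin m → Bool) (j : ℕ) : Bool :=
  if h : j < m then p ⟨j, h⟩ else false

def rk {n : ℕ} (p : Fin (2 * n) → Bool) : ℕ :=
  ((Finset.Icc 1 (n - 1)).filter fun i => stepAt p (2 * i - 1) = true).card

/-! ### Basic step/count lemmas -/

lemma stepAt_lt {m : ℕ} (p : Fin m → Bool) {j : ℕ} (h : j < m) :
    stepAt p j = p ⟨j, h⟩ := by simp [stepAt, h]

lemma stepAt_ge {m : ℕ} (p : Fin m → Bool) {j : ℕ} (h : m ≤ j) :
    stepAt p j = false := by simp [stepAt, Nat.not_lt.mpr h]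

/-- Running count of up steps, via `stepAt`. -/
def S {m : ℕ} (p : Fin m → Bool) (k : ℕ) : ℕ :=
  ∑ j ∈ Finset.range k, (if stepAt p j = true then 1 else 0)

lemma S_succ {m : ℕ} (p : Fin m → Bool) (k : ℕ) :
    S p (k + 1) = S p k + (if stepAt p k = true then 1 else 0) := by
  unfold S; rw [Finset.sum_range_succ]

lemma S_le {m : ℕ} (p : Fin m → Bool) (k : ℕ) : S p k ≤ k := by
  calc S p k ≤ ∑ _j ∈ Finset.range k, 1 := Finset.sum_le_sum (by intro i _; split <;> omega)
  _ = k := by simp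

lemma S_mono {m : ℕ} (p : Fin m → Bool) {k l : ℕ} (h : k ≤ l) : S p k ≤ S p l :=
  Finset.sum_le_sum_of_subset (Finset.range_subset_range.mpr h)

lemma S_stable {m : ℕ} (p : Fin m → Bool) {k : ℕ} (h : m ≤ k) : S p k = S p m := by
  induction k with
  | zero =>
    have hm : m = 0 := by omega
    subst hm; rfl
  | succ k ih =>
    rcases Nat.lt_or_ge k m with hk | hk
    · have hm : m = k + 1 := by omega
      subst hm; rfl
    · rw [S_succ, stepAt_ge p hk, ih hk]; simp

lemma upCount_eq_S {m : ℕ} (p : Fin m → Bool) (k : ℕ) :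
    upCount p k = S p k := by
  have h1 : upCount p k
      = ∑ j ∈ Finset.range m, (if j < k ∧ stepAt p j = true then 1 else 0) := by
    rw [upCount, Finset.card_filter, ← Fin.sum_univ_eq_sum_range
      (fun j => if j < k ∧ stepAt p j = true then 1 else 0) m]
    refine Finset.sum_congr rfl fun i _ => ?_
    rw [stepAt_lt p i.isLt]
  have h2 : ∑ j ∈ Finset.range m, (if j < k ∧ stepAt p j = true then 1 else 0)
      = ∑ j ∈ Finset.range (k + m), (if j < k ∧ stepAt p j = true then 1 else 0) := by
    apply Finset.sum_subset (Finset.range_subset_range.mpr (by omega))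
    intro x hx hxm
    have hmm : m ≤ x := by
      simp only [Finset.mem_range] at hxm; omega
    simp [stepAt_ge p hmm]
  have h3 : S p k
      = ∑ j ∈ Finset.range (k + m), (if j < k ∧ stepAt p j = true then 1 else 0) := by
    unfold S
    rw [Finset.sum_congr rfl (fun j hj => by
      have : j < k := Finset.mem_range.mp hj
      simp [this] :
      ∀ j ∈ Finset.range k, (if stepAt p j = true then 1 else 0)
        = if j < k ∧ stepAt p j = true then 1 else 0)]
    apply Finset.sum_subset (Finset.range_subset_range.mpr (by omega))
    intro x hx hxk
    have : ¬ x < k := by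
      simp only [Finset.mem_range] at hxk; omega
    simp [this]
  rw [h1, h2, h3]

lemma upCount_add_downCount {m : ℕ} (p : Fin m → Bool) (k : ℕ) :
    upCount p k + downCount p k = min k m := by
  have : upCount p k + downCount p k
      = ∑ i : Fin m, ((if (i : ℕ) < k ∧ p i = true then 1 else 0)
          + (if (i : ℕ) < k ∧ p i = false then 1 else 0)) := by
    rw [upCount, downCount, Finset.card_filter, Finset.card_filter, Finset.sum_add_distrib]
  rw [this]
  have : ∀ i : Fin m, ((if (i : ℕ) < k ∧ p i = true then 1 else 0)
          + (if (i : ℕ) < k ∧ p i = false then 1 else 0))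
        = if (i : ℕ) < k then 1 else 0 := by
    intro i
    rcases Nat.lt_or_ge (i : ℕ) k with h | h
    · cases hb : p i <;> simp [h, hb]
    · simp [Nat.not_lt.mpr h]
  rw [Finset.sum_congr rfl fun i _ => this i, ← Finset.card_filter]
  have : (Finset.univ.filter fun i : Fin m => (i : ℕ) < k).card
      = (Finset.range (min k m)).card := by
    apply Finset.card_bij (fun (i : Fin m) _ => (i : ℕ))
    · intro a ha
      simp only [Finset.mem_filter, Finset.mem_univ, true_and] at ha
      simp [Finset.mem_range]; omega
    · intro a _ b _ h; exact Fin.val_injective h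
    · intro b hb
      simp only [Finset.mem_range] at hb
      exact ⟨⟨b, by omega⟩, by simp; omega, rfl⟩
  rw [this, Finset.card_range]

/-- Dyck condition in terms of `S`. -/
lemma isDyck_iff {n : ℕ} (p : Fin (2 * n) → Bool) :
    IsDyck n p ↔ S p (2 * n) = n ∧ ∀ k ≤ 2 * n, k ≤ 2 * S p k := by
  constructor
  · rintro ⟨h1, h2⟩
    refine ⟨by rw [← upCount_eq_S, h1], fun k hk => ?_⟩
    have := h2 k (by omega)
    have h3 := upCount_add_downCount p k
    rw [Nat.min_eq_left hk] at h3
    rw [← upCount_eq_S]; omega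
  · rintro ⟨h1, h2⟩
    refine ⟨by rw [upCount_eq_S, h1], fun k hk => ?_⟩
    have h4 : k ≤ 2 * n := by omega
    have := h2 k h4
    have h3 := upCount_add_downCount p k
    rw [Nat.min_eq_left h4] at h3
    rw [upCount_eq_S] at h3 ⊢
    omega

lemma height_eq {n : ℕ} {p : Fin (2 * n) → Bool} (hd : IsDyck n p) {k : ℕ} (hk : k ≤ 2 * n) :
    height p k = 2 * S p k - k := by
  rw [isDyck_iff] at hd
  have h3 := upCount_add_downCount p k
  rw [Nat.min_eq_left hk] at h3
  rw [upCount_eq_S] at h3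
  have := hd.2 k hk
  rw [height, upCount_eq_S]
  omega

lemma area_eq {n : ℕ} {p : Fin (2 * n) → Bool} (hd : IsDyck n p) :
    area p = ∑ k ∈ Finset.range (2 * n + 1), (2 * S p k - k) / 2 := by
  refine Finset.sum_congr rfl fun k hk => ?_
  rw [height_eq hd (by simpa using Nat.lt_succ_iff.mp (Finset.mem_range.mp hk))]
/-! ### Helpers -/

lemma card_Icc_filter (c : ℕ → Prop) [DecidablePred c] (a : ℕ) :
    ((Finset.Icc 1 a).filter c).card = ∑ m ∈ Finset.range a, (if c (m+1) then 1 else 0) := by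
  induction a with
  | zero => simp
  | succ a ih =>
    have h : Finset.Icc 1 (a+1) = insert (a+1) (Finset.Icc 1 a) := by
      ext x; simp only [Finset.mem_Icc, Finset.mem_insert]; omega
    rw [h, Finset.filter_insert, Finset.sum_range_succ, ← ih]
    by_cases hc : c (a+1)
    · rw [if_pos hc, if_pos hc, Finset.card_insert_of_notMem (by simp)]
    · rw [if_neg hc, if_neg hc, Nat.add_zero]

lemma sum_range_two_mul (f : ℕ → ℕ) (a : ℕ) :
    ∑ j ∈ Finset.range (2*a), f j = ∑ m ∈ Finset.range a, (f (2*m) + f (2*m+1)) := by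
  induction a with
  | zero => simp
  | succ a ih =>
    rw [show 2*(a+1) = 2*a + 1 + 1 by omega, Finset.sum_range_succ, Finset.sum_range_succ,
      ih, Finset.sum_range_succ]
    omega

lemma odd_indicator_sum (a : ℕ) :
    ∑ m ∈ Finset.range (2*a+1), (if m % 2 = 1 then 1 else 0) = a := by
  induction a with
  | zero => decide
  | succ a ih =>
    rw [show 2*(a+1)+1 = (2*a+1) + 1 + 1 by omega, Finset.sum_range_succ,
      Finset.sum_range_succ, ih]
    have h1 : (2*a+1) % 2 = 1 := by omega
    have h2 : (2*a+1+1) % 2 = 0 := by omega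
    simp [h1, h2]

/-- Last step of a nonempty Dyck path is down. -/
lemma lastStep {a : ℕ} {p : Fin (2*a) → Bool} (hd : IsDyck a p) (ha : 1 ≤ a) :
    stepAt p (2*a-1) = false ∧ S p (2*a-1) = a := by
  obtain ⟨h1, h2⟩ := (isDyck_iff p).mp hd
  have hs := S_succ p (2*a-1)
  rw [show 2*a-1+1 = 2*a by omega, h1] at hs
  have hm : S p (2*a-1) ≤ a := by
    have := S_mono p (show 2*a-1 ≤ 2*a by omega); omega
  have hineq := h2 (2*a-1) (by omega)
  constructor
  · by_contra hc
    rw [Bool.not_eq_false] at hc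
    rw [hc, if_pos rfl] at hs
    omega
  · omega

/-! ### Gluing -/

def glue (n a : ℕ) {b : ℕ} (p1 : Fin (2*a) → Bool) (p2 : Fin (2*b) → Bool) :
    Fin (2*n) → Bool :=
  fun i => if (i:ℕ) = 0 then true
    else if (i:ℕ) < 2*a+1 then stepAt p1 ((i:ℕ)-1)
    else if (i:ℕ) = 2*a+1 then false
    else stepAt p2 ((i:ℕ)-(2*a+2))

lemma stepAt_glue {n a b : ℕ} (p1 : Fin (2*a) → Bool) (p2 : Fin (2*b) → Bool)
    {x : ℕ} (hx : x < 2*n) :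
    stepAt (glue n a p1 p2) x
      = if x = 0 then true
        else if x < 2*a+1 then stepAt p1 (x-1)
        else if x = 2*a+1 then false
        else stepAt p2 (x-(2*a+2)) := by
  rw [stepAt_lt _ hx]; rfl

lemma S_glue {n a b : ℕ} {p1 : Fin (2*a) → Bool} {p2 : Fin (2*b) → Bool} :
    ∀ x ≤ 2*n, S (glue n a p1 p2) x
      = (if 1 ≤ x then 1 else 0) + S p1 (x-1)
        + (if 2*a+2 ≤ x then S p2 (x-(2*a+2)) else 0) := by
  intro x
  induction x with
  | zero => intro _; simp [S]
  | succ x ih =>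
    intro hx
    have hx' : x < 2*n := by omega
    have hrec := ih (by omega)
    have hS0' : S p2 0 = 0 := rfl
    rw [S_succ, hrec, stepAt_glue p1 p2 hx']
    by_cases hx0 : x = 0
    · subst hx0
      norm_num
      rfl
    · by_cases hxa : x < 2*a+1
      · have e1 : S p1 (x+1-1) = S p1 (x-1) + (if stepAt p1 (x-1) = true then 1 else 0) := by
          have h := S_succ p1 (x-1)
          rwa [show x-1+1 = x+1-1 by omega] at h
        rw [if_neg hx0, if_pos hxa, e1,
          if_pos (show (1:ℕ) ≤ x by omega), if_pos (show (1:ℕ) ≤ x+1 by omega),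
          if_neg (show ¬ (2*a+2 ≤ x) by omega), if_neg (show ¬ (2*a+2 ≤ x+1) by omega)]
        omega
      · by_cases hxb : x = 2*a+1
        · have e2 : S p1 (x+1-1) = S p1 (x-1) := by
            rw [show x+1-1 = x by omega, show x-1 = 2*a by omega]
            exact S_stable p1 (by omega)
          rw [if_neg hx0, if_neg hxa, if_pos hxb, e2,
            if_pos (show (1:ℕ) ≤ x by omega), if_pos (show (1:ℕ) ≤ x+1 by omega),
            if_neg (show ¬ (2*a+2 ≤ x) by omega), if_pos (show 2*a+2 ≤ x+1 by omega),
            show x+1-(2*a+2) = 0 by omega, hS0']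
          norm_num
        · have e1 : S p1 (x+1-1) = S p1 (x-1) := by
            rw [show x+1-1 = x by omega, S_stable p1 (show 2*a ≤ x by omega),
              S_stable p1 (show 2*a ≤ x-1 by omega)]
          have e3 : S p2 (x+1-(2*a+2)) = S p2 (x-(2*a+2))
              + (if stepAt p2 (x-(2*a+2)) = true then 1 else 0) := by
            have h := S_succ p2 (x-(2*a+2))
            rwa [show x-(2*a+2)+1 = x+1-(2*a+2) by omega] at h
          rw [if_neg hx0, if_neg hxa, if_neg hxb, e1, e3,
            if_pos (show (1:ℕ) ≤ x by omega), if_pos (show (1:ℕ) ≤ x+1 by omega),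
            if_pos (show 2*a+2 ≤ x by omega), if_pos (show 2*a+2 ≤ x+1 by omega)]
          omega
/-! ### Properties of glue -/

section GlueFacts

variable {a b : ℕ} {p1 : Fin (2*a) → Bool} {p2 : Fin (2*b) → Bool}

lemma glue_isDyck (hd1 : IsDyck a p1) (hd2 : IsDyck b p2) :
    IsDyck (a+b+1) (glue (a+b+1) a p1 p2) := by
  obtain ⟨h1, h1'⟩ := (isDyck_iff p1).mp hd1
  obtain ⟨h2, h2'⟩ := (isDyck_iff p2).mp hd2
  rw [isDyck_iff]
  constructor
  · rw [S_glue (2*(a+b+1)) le_rfl, if_pos (by omega : (1:ℕ) ≤ 2*(a+b+1)),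
      if_pos (by omega : 2*a+2 ≤ 2*(a+b+1)), S_stable p1 (by omega : 2*a ≤ 2*(a+b+1)-1),
      show 2*(a+b+1)-(2*a+2) = 2*b by omega, h1, h2]
    omega
  · intro k hk
    rw [S_glue k hk]
    by_cases hk0 : k = 0
    · subst hk0; exact Nat.zero_le _
    · by_cases h2a : 2*a+2 ≤ k
      · rw [if_pos (by omega : (1:ℕ) ≤ k), if_pos h2a,
          S_stable p1 (by omega : 2*a ≤ k-1), h1]
        have := h2' (k-(2*a+2)) (by omega)
        omega
      · rw [if_pos (by omega : (1:ℕ) ≤ k), if_neg h2a]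
        have := h1' (k-1) (by omega)
        omega

lemma area_glue (hd1 : IsDyck a p1) (hd2 : IsDyck b p2) :
    area (glue (a+b+1) a p1 p2) = a + area p1 + area p2 := by
  have hg := glue_isDyck hd1 hd2
  rw [area_eq hg, area_eq hd1, area_eq hd2]
  rw [show 2*(a+b+1)+1 = (2*a+2) + (2*b+1) by omega, Finset.sum_range_add]
  have hA : ∑ k ∈ Finset.range (2*a+2), (2 * S (glue (a+b+1) a p1 p2) k - k)/2
      = a + ∑ k ∈ Finset.range (2*a+1), (2 * S p1 k - k)/2 := by
    rw [Finset.sum_range_succ']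
    have h0 : (2 * S (glue (a+b+1) a p1 p2) 0 - 0)/2 = 0 := by
      have : S (glue (a+b+1) a p1 p2) 0 = 0 := rfl
      rw [this]
    rw [h0, Nat.add_zero]
    have hterm : ∀ i ∈ Finset.range (2*a+1),
        (2 * S (glue (a+b+1) a p1 p2) (i+1) - (i+1))/2
          = (2 * S p1 i - i)/2 + (if i % 2 = 1 then 1 else 0) := by
      intro i hi
      have hi' : i < 2*a+1 := Finset.mem_range.mp hi
      rw [S_glue (i+1) (by omega), if_pos (by omega : (1:ℕ) ≤ i+1),
        if_neg (by omega : ¬ (2*a+2 ≤ i+1)), Nat.add_sub_cancel, Nat.add_zero]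
      have hineq := ((isDyck_iff p1).mp hd1).2 i (by omega)
      by_cases hpar : i % 2 = 1
      · rw [if_pos hpar]; omega
      · rw [if_neg hpar]; omega
    rw [Finset.sum_congr rfl hterm, Finset.sum_add_distrib, odd_indicator_sum]
    omega
  have hB : ∑ i ∈ Finset.range (2*b+1),
        (2 * S (glue (a+b+1) a p1 p2) (2*a+2+i) - (2*a+2+i))/2
      = ∑ i ∈ Finset.range (2*b+1), (2 * S p2 i - i)/2 := by
    refine Finset.sum_congr rfl fun i hi => ?_
    have hi' : i < 2*b+1 := Finset.mem_range.mp hi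
    have h1 : S p1 (2*a) = a := ((isDyck_iff p1).mp hd1).1
    rw [S_glue (2*a+2+i) (by omega), if_pos (by omega : (1:ℕ) ≤ 2*a+2+i),
      if_pos (by omega : 2*a+2 ≤ 2*a+2+i), S_stable p1 (by omega : 2*a ≤ 2*a+2+i-1),
      h1, show 2*a+2+i-(2*a+2) = i by omega]
    omega
  rw [hA, hB]

lemma E_add_rk (hd1 : IsDyck a p1) :
    (∑ m ∈ Finset.range a, if stepAt p1 (2*m) = true then 1 else 0) + rk p1 = a := by
  have h1 : S p1 (2*a) = a := ((isDyck_iff p1).mp hd1).1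
  rcases Nat.eq_zero_or_pos a with ha | ha
  · subst ha
    simp [rk]
  · obtain ⟨c, rfl⟩ : ∃ c, a = c+1 := ⟨a-1, by omega⟩
    have hlast := lastStep hd1 ha
    have hl : stepAt p1 (2*c+1) = false := by
      have h := hlast.1
      rwa [show 2*(c+1)-1 = 2*c+1 by omega] at h
    have hrk : rk p1 = ∑ m ∈ Finset.range c, (if stepAt p1 (2*m+1) = true then 1 else 0) := by
      rw [rk, card_Icc_filter, Nat.add_sub_cancel]
      refine Finset.sum_congr rfl fun m _ => ?_
      rw [show 2*(m+1)-1 = 2*m+1 by omega]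
    have hrk2 : rk p1 = ∑ m ∈ Finset.range (c+1), (if stepAt p1 (2*m+1) = true then 1 else 0) := by
      rw [Finset.sum_range_succ, hl, hrk]
      simp
    rw [hrk2, ← Finset.sum_add_distrib]
    have h2 := sum_range_two_mul (fun j => if stepAt p1 j = true then 1 else 0) (c+1)
    rw [← h2]
    exact h1

lemma rk_glue (hd1 : IsDyck a p1) (hd2 : IsDyck b p2) :
    rk (glue (a+b+1) a p1 p2) + rk p1 = a + rk p2 := by
  set g := glue (a+b+1) a p1 p2 with hgdef
  have hrkg : rk g = ∑ m ∈ Finset.range (a+b),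
      (if stepAt g (2*(m+1)-1) = true then 1 else 0) := by
    rw [rk, show a+b+1-1 = a+b by omega, card_Icc_filter]
  have hstep : ∀ m, m < a+b → stepAt g (2*(m+1)-1)
      = if m < a then stepAt p1 (2*m)
        else if m = a then false
        else stepAt p2 (2*(m-a)-1) := by
    intro m hm
    rw [hgdef, stepAt_glue p1 p2 (by omega : 2*(m+1)-1 < 2*(a+b+1))]
    by_cases hma : m < a
    · rw [if_neg (by omega : ¬ (2*(m+1)-1 = 0)), if_pos (by omega : 2*(m+1)-1 < 2*a+1),
        if_pos hma, show 2*(m+1)-1-1 = 2*m by omega]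
    · by_cases hma2 : m = a
      · rw [if_neg (by omega : ¬ (2*(m+1)-1 = 0)), if_neg (by omega : ¬ (2*(m+1)-1 < 2*a+1)),
          if_pos (by omega : 2*(m+1)-1 = 2*a+1), if_neg (by omega : ¬ m < a), if_pos hma2]
      · rw [if_neg (by omega : ¬ (2*(m+1)-1 = 0)), if_neg (by omega : ¬ (2*(m+1)-1 < 2*a+1)),
          if_neg (by omega : ¬ (2*(m+1)-1 = 2*a+1)), if_neg (by omega : ¬ m < a),
          if_neg hma2, show 2*(m+1)-1-(2*a+2) = 2*(m-a)-1 by omega]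
  have hsum : rk g = (∑ m ∈ Finset.range a, if stepAt p1 (2*m) = true then 1 else 0)
      + rk p2 := by
    rw [hrkg, Finset.sum_congr rfl (fun m hm => by
        rw [hstep m (Finset.mem_range.mp hm)]),
      Finset.sum_range_add]
    congr 1
    · refine Finset.sum_congr rfl fun m hm => ?_
      rw [if_pos (Finset.mem_range.mp hm)]
    · -- ∑ m ∈ range b, ite over (a+m)
      have hterm : ∀ m, (if (if a+m < a then stepAt p1 (2*(a+m))
            else if a+m = a then false
            else stepAt p2 (2*(a+m-a)-1)) = true then 1 else 0)
          = if m = 0 then 0 else (if stepAt p2 (2*m-1) = true then 1 else 0) := by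
        intro m
        by_cases hm0 : m = 0
        · subst hm0
          rw [if_neg (by omega : ¬ (a+0 < a)), if_pos (by omega : a+0 = a)]
          simp
        · rw [if_neg (by omega : ¬ (a+m < a)), if_neg (by omega : ¬ (a+m = a)),
            show a+m-a = m by omega, if_neg hm0]
      rw [Finset.sum_congr rfl (fun m _ => hterm m)]
      rcases Nat.eq_zero_or_pos b with hb | hb
      · subst hb; simp [rk]
      · obtain ⟨c, rfl⟩ : ∃ c, b = c+1 := ⟨b-1, by omega⟩
        rw [Finset.sum_range_succ', if_pos rfl, Nat.add_zero]
        have hrk2 : rk p2 = ∑ m ∈ Finset.range c,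
            (if stepAt p2 (2*(m+1)-1) = true then 1 else 0) := by
          rw [rk, card_Icc_filter, Nat.add_sub_cancel]
        rw [hrk2]
        refine Finset.sum_congr rfl fun m _ => ?_
        rw [if_neg (by omega : ¬ (m+1 = 0)), show 2*(m+1)-1 = 2*m+1 by omega]
  rw [hsum]
  have := E_add_rk hd1
  omega

end GlueFacts
/-! ### Splitting a Dyck path at its first return -/

lemma stepAt_val {m : ℕ} (p : Fin m → Bool) (i : Fin m) : stepAt p (i:ℕ) = p i := by
  rw [stepAt_lt p i.isLt]

open Classical in
/-- index of first return: `fa p` is `a` where the first return is at `2a+2`. -/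
noncomputable def fa {n : ℕ} (p : Fin (2*n) → Bool) : ℕ :=
  if h : ∃ x, 0 < x ∧ 2 * S p x = x then (Nat.find h) / 2 - 1 else 0

lemma exists_return {m : ℕ} {p : Fin (2*(m+1)) → Bool} (hd : IsDyck (m+1) p) :
    ∃ x, 0 < x ∧ 2 * S p x = x :=
  ⟨2*(m+1), by omega, by rw [((isDyck_iff p).mp hd).1]⟩

lemma fa_spec {m : ℕ} {p : Fin (2*(m+1)) → Bool} (hd : IsDyck (m+1) p) :
    2 * S p (2 * fa p + 2) = 2 * fa p + 2
      ∧ (∀ x, 0 < x → x < 2 * fa p + 2 → x < 2 * S p x)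
      ∧ fa p ≤ m := by
  have hex := exists_return hd
  obtain ⟨h1', h2'⟩ := (isDyck_iff p).mp hd
  have hFspec := Nat.find_spec hex
  have hFle : Nat.find hex ≤ 2*(m+1) := Nat.find_le ⟨by omega, by rw [h1']⟩
  have hF2 : 2 ≤ Nat.find hex := by
    have h1 := hFspec.1
    have h2 := hFspec.2
    omega
  have hfa : fa p = (Nat.find hex) / 2 - 1 := by rw [fa, dif_pos hex]
  have hFeq : 2 * fa p + 2 = Nat.find hex := by
    have h2 := hFspec.2
    omega
  refine ⟨by rw [hFeq]; exact hFspec.2, fun x hx0 hx => ?_, by omega⟩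
  have hne := Nat.find_min hex (by omega : x < Nat.find hex)
  have hle := h2' x (by omega)
  omega

def split1 {n : ℕ} (a : ℕ) (p : Fin (2*n) → Bool) : Fin (2*a) → Bool :=
  fun i => stepAt p ((i:ℕ)+1)

def split2 {n : ℕ} (a b : ℕ) (p : Fin (2*n) → Bool) : Fin (2*b) → Bool :=
  fun i => stepAt p ((i:ℕ)+(2*a+2))

lemma S_shift {n c a : ℕ} (p : Fin (2*n) → Bool) (r : Fin (2*a) → Bool)
    (hq : ∀ i : Fin (2*a), r i = stepAt p ((i:ℕ)+c)) :
    ∀ y ≤ 2*a, S p (c+y) = S p c + S r y := by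
  intro y
  induction y with
  | zero => intro _; simp [S]
  | succ y ih =>
    intro hy
    have hrec := ih (by omega)
    have h1 : S p (c+(y+1)) = S p (c+y) + (if stepAt p (c+y) = true then 1 else 0) := by
      have := S_succ p (c+y)
      rwa [show c+y+1 = c+(y+1) by omega] at this
    have h2 : stepAt r y = stepAt p (c+y) := by
      rw [stepAt_lt r (by omega : y < 2*a), hq ⟨y, by omega⟩]
      norm_num [Nat.add_comm]
    rw [h1, hrec, S_succ, h2]
    omega

section SplitFacts

variable {m : ℕ} {p : Fin (2*(m+1)) → Bool}

lemma S_one (hd : IsDyck (m+1) p) : S p 1 = 1 := by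
  have hsp := fa_spec hd
  have h1 := hsp.2.1 1 (by omega) (by omega)
  have h2 := S_le p 1
  omega

lemma split1_S (hd : IsDyck (m+1) p) :
    ∀ y ≤ 2 * fa p, S p (1+y) = 1 + S (split1 (fa p) p) y := by
  intro y hy
  rw [S_shift p (split1 (fa p) p) (fun i => rfl) y hy, S_one hd]

lemma S_ret (hd : IsDyck (m+1) p) :
    S p (2 * fa p + 1) = fa p + 1 ∧ stepAt p (2 * fa p + 1) = false := by
  obtain ⟨hret, hstrict, ham⟩ := fa_spec hd
  have hs := S_succ p (2 * fa p + 1)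
  rw [show 2*fa p+1+1 = 2*fa p+2 by omega] at hs
  have h1 := hstrict (2*fa p+1) (by omega) (by omega)
  have h2 : S p (2*fa p+1) ≤ S p (2*fa p+2) := S_mono p (by omega)
  have h3 : S p (2*fa p+1) = fa p + 1 := by omega
  refine ⟨h3, ?_⟩
  by_contra hc
  rw [Bool.not_eq_false] at hc
  rw [hc, if_pos rfl] at hs
  omega

lemma split1_isDyck (hd : IsDyck (m+1) p) : IsDyck (fa p) (split1 (fa p) p) := by
  obtain ⟨hret, hstrict, ham⟩ := fa_spec hd
  rw [isDyck_iff]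
  constructor
  · have h := split1_S hd (2 * fa p) le_rfl
    rw [show 1+2*fa p = 2*fa p+1 by omega, (S_ret hd).1] at h
    omega
  · intro k hk
    have h := split1_S hd k hk
    have h2 := hstrict (1+k) (by omega) (by omega)
    omega

lemma split2_S (hd : IsDyck (m+1) p) :
    ∀ y ≤ 2 * (m - fa p), S p (2*fa p+2+y) = fa p + 1 + S (split2 (fa p) (m - fa p) p) y := by
  intro y hy
  have h := S_shift p (split2 (fa p) (m - fa p) p) (fun i => rfl) y hy
  have hret := (fa_spec hd).1
  omega

lemma split2_isDyck (hd : IsDyck (m+1) p) :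
    IsDyck (m - fa p) (split2 (fa p) (m - fa p) p) := by
  obtain ⟨hret, hstrict, ham⟩ := fa_spec hd
  obtain ⟨h1', h2'⟩ := (isDyck_iff p).mp hd
  rw [isDyck_iff]
  constructor
  · have h := split2_S hd (2 * (m - fa p)) le_rfl
    rw [show 2*fa p+2+2*(m - fa p) = 2*(m+1) by omega, h1'] at h
    omega
  · intro k hk
    have h := split2_S hd k hk
    have h2 := h2' (2*fa p+2+k) (by omega)
    omega

lemma glue_split (hd : IsDyck (m+1) p) :
    glue (m+1) (fa p) (split1 (fa p) p) (split2 (fa p) (m - fa p) p) = p := by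
  obtain ⟨hret, hstrict, ham⟩ := fa_spec hd
  funext i
  have hi := i.isLt
  show (if (i:ℕ) = 0 then true
    else if (i:ℕ) < 2*(fa p)+1 then stepAt (split1 (fa p) p) ((i:ℕ)-1)
    else if (i:ℕ) = 2*(fa p)+1 then false
    else stepAt (split2 (fa p) (m - fa p) p) ((i:ℕ)-(2*(fa p)+2))) = p i
  by_cases h0 : (i:ℕ) = 0
  · rw [if_pos h0, ← stepAt_val p i, h0]
    have hs : S p 1 = S p 0 + (if stepAt p 0 = true then 1 else 0) := S_succ p 0
    have h1 : S p 1 = 1 := S_one hd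
    have h0' : S p 0 = 0 := rfl
    by_cases hb : stepAt p 0 = true
    · rw [hb]
    · rw [if_neg hb] at hs
      exfalso
      omega
  · by_cases h1 : (i:ℕ) < 2*(fa p)+1
    · rw [if_neg h0, if_pos h1,
        stepAt_lt (split1 (fa p) p) (by omega : (i:ℕ)-1 < 2*(fa p))]
      show stepAt p ((i:ℕ)-1+1) = p i
      rw [show (i:ℕ)-1+1 = (i:ℕ) by omega, stepAt_val]
    · by_cases h2 : (i:ℕ) = 2*(fa p)+1
      · rw [if_neg h0, if_neg h1, if_pos h2, ← stepAt_val p i, h2, (S_ret hd).2]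
      · rw [if_neg h0, if_neg h1, if_neg h2,
          stepAt_lt (split2 (fa p) (m - fa p) p)
            (by omega : (i:ℕ)-(2*(fa p)+2) < 2*(m - fa p))]
        show stepAt p ((i:ℕ)-(2*(fa p)+2)+(2*(fa p)+2)) = p i
        rw [show (i:ℕ)-(2*(fa p)+2)+(2*(fa p)+2) = (i:ℕ) by omega, stepAt_val]

end SplitFacts

/-! ### fa of a glued path, and recovering the pieces -/

lemma fa_glue {n a b : ℕ} {p1 : Fin (2*a) → Bool} {p2 : Fin (2*b) → Bool}
    (hn : n = a+b+1) (hd1 : IsDyck a p1) (hd2 : IsDyck b p2) :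
    fa (glue n a p1 p2) = a := by
  subst hn
  have hg := glue_isDyck hd1 hd2
  have hex : ∃ x, 0 < x ∧ 2 * S (glue (a+b+1) a p1 p2) x = x := exists_return hg
  have h1 : S p1 (2*a) = a := ((isDyck_iff p1).mp hd1).1
  have h1' := ((isDyck_iff p1).mp hd1).2
  have hfind : Nat.find hex = 2*a+2 := by
    rw [Nat.find_eq_iff]
    constructor
    · refine ⟨by omega, ?_⟩
      rw [S_glue (2*a+2) (by omega), if_pos (by omega : (1:ℕ) ≤ 2*a+2),
        if_pos le_rfl, show 2*a+2-(2*a+2) = 0 by omega,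
        S_stable p1 (by omega : 2*a ≤ 2*a+2-1), h1]
      have : S p2 0 = 0 := rfl
      omega
    · intro x hx
      rintro ⟨hx0, hxeq⟩
      rw [S_glue x (by omega), if_pos (by omega : (1:ℕ) ≤ x),
        if_neg (by omega : ¬ (2*a+2 ≤ x))] at hxeq
      have := h1' (x-1) (by omega)
      omega
  rw [fa, dif_pos hex, hfind]
  omega

lemma glue_stepAt_left {n a b : ℕ} (p1 : Fin (2*a) → Bool) (p2 : Fin (2*b) → Bool)
    (i : Fin (2*a)) (h : (i:ℕ)+1 < 2*n) :
    stepAt (glue n a p1 p2) ((i:ℕ)+1) = p1 i := by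
  rw [stepAt_glue p1 p2 h, if_neg (by omega : ¬ ((i:ℕ)+1 = 0)),
    if_pos (by have := i.isLt; omega : (i:ℕ)+1 < 2*a+1),
    show (i:ℕ)+1-1 = (i:ℕ) by omega, stepAt_val]

lemma glue_stepAt_right {n a b : ℕ} (p1 : Fin (2*a) → Bool) (p2 : Fin (2*b) → Bool)
    (i : Fin (2*b)) (h : (i:ℕ)+(2*a+2) < 2*n) :
    stepAt (glue n a p1 p2) ((i:ℕ)+(2*a+2)) = p2 i := by
  rw [stepAt_glue p1 p2 h, if_neg (by omega : ¬ ((i:ℕ)+(2*a+2) = 0)),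
    if_neg (by omega : ¬ ((i:ℕ)+(2*a+2) < 2*a+1)),
    if_neg (by omega : ¬ ((i:ℕ)+(2*a+2) = 2*a+1)),
    show (i:ℕ)+(2*a+2)-(2*a+2) = (i:ℕ) by omega, stepAt_val]
/-! ### The coefficient identities -/

lemma S_zero_order (p : Fin (2*0) → Bool) (k : ℕ) : S p k = 0 := by
  have h := S_stable p (show 2*0 ≤ k by omega)
  rw [h]
  simp [S]

lemma sum_dyck_zero (q t : ℝ) : ∑ p ∈ dyckSet 0, q ^ area p * t ^ rk p = 1 := by
  have hd0 : ∀ p : Fin (2*0) → Bool, IsDyck 0 p := by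
    intro p
    rw [isDyck_iff]
    exact ⟨by rw [S_zero_order], fun k hk => by rw [S_zero_order]; omega⟩
  have hset : dyckSet 0 = {fun _ => false} := by
    ext p
    simp only [dyckSet, Finset.mem_filter, Finset.mem_univ, true_and, Finset.mem_singleton]
    constructor
    · intro _; funext i; exact absurd i.isLt (by omega)
    · intro _; exact hd0 p
  rw [hset, Finset.sum_singleton]
  have harea : area (fun _ : Fin (2*0) => false) = 0 := by
    rw [area]
    refine Finset.sum_eq_zero fun k _ => ?_
    rw [height, upCount_eq_S, S_zero_order]
    simp
  have hrk : rk (fun _ : Fin (2*0) => false) = 0 := by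
    rw [rk]
    have : Finset.Icc 1 (0-1) = (∅ : Finset ℕ) := rfl
    rw [this]
    rfl
  rw [harea, hrk]
  norm_num

/-! ### Wrappers with flexible ambient order -/

lemma glue_isDyck' {n a b : ℕ} {p1 : Fin (2*a) → Bool} {p2 : Fin (2*b) → Bool}
    (hn : n = a+b+1) (hd1 : IsDyck a p1) (hd2 : IsDyck b p2) :
    IsDyck n (glue n a p1 p2) := by
  subst hn; exact glue_isDyck hd1 hd2

lemma area_glue' {n a b : ℕ} {p1 : Fin (2*a) → Bool} {p2 : Fin (2*b) → Bool}
    (hn : n = a+b+1) (hd1 : IsDyck a p1) (hd2 : IsDyck b p2) :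
    area (glue n a p1 p2) = a + area p1 + area p2 := by
  subst hn; exact area_glue hd1 hd2

lemma rk_glue' {n a b : ℕ} {p1 : Fin (2*a) → Bool} {p2 : Fin (2*b) → Bool}
    (hn : n = a+b+1) (hd1 : IsDyck a p1) (hd2 : IsDyck b p2) :
    rk (glue n a p1 p2) + rk p1 = a + rk p2 := by
  subst hn; exact rk_glue hd1 hd2

lemma sum_dyck_succ (q t : ℝ) (ht : t ≠ 0) (m : ℕ) :
    ∑ p ∈ dyckSet (m+1), q ^ area p * t ^ rk p
      = ∑ ab ∈ Finset.HasAntidiagonal.antidiagonal m,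
          ((q*t)^ab.1 * ∑ p1 ∈ dyckSet ab.1, q ^ area p1 * t⁻¹ ^ rk p1)
          * ∑ p2 ∈ dyckSet ab.2, q ^ area p2 * t ^ rk p2 := by
  have hstep1 : ∀ ab : ℕ × ℕ,
      ((q*t)^ab.1 * ∑ p1 ∈ dyckSet ab.1, q ^ area p1 * t⁻¹ ^ rk p1)
          * ∑ p2 ∈ dyckSet ab.2, q ^ area p2 * t ^ rk p2
        = ∑ pr ∈ (dyckSet ab.1) ×ˢ (dyckSet ab.2),
            (q*t)^ab.1 * (q ^ area pr.1 * t⁻¹ ^ rk pr.1) * (q ^ area pr.2 * t ^ rk pr.2) := by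
    intro ab
    rw [Finset.sum_product,
      show ((q*t)^ab.1 * ∑ p1 ∈ dyckSet ab.1, q ^ area p1 * t⁻¹ ^ rk p1)
        = ∑ p1 ∈ dyckSet ab.1, (q*t)^ab.1 * (q ^ area p1 * t⁻¹ ^ rk p1) from
        Finset.mul_sum _ _ _,
      Finset.sum_mul_sum]
  rw [Finset.sum_congr rfl (fun ab _ => hstep1 ab), Finset.sum_sigma']
  symm
  apply Finset.sum_bij (fun x _ => glue (m+1) x.1.1 x.2.1 x.2.2)
  · -- membership
    rintro ⟨⟨a, b⟩, p1, p2⟩ hx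
    rw [Finset.mem_sigma, Finset.mem_product] at hx
    obtain ⟨h1, h2, h3⟩ := hx
    have hab : a + b = m := Finset.HasAntidiagonal.mem_antidiagonal.mp h1
    have hd1 : IsDyck a p1 := (Finset.mem_filter.mp h2).2
    have hd2 : IsDyck b p2 := (Finset.mem_filter.mp h3).2
    exact Finset.mem_filter.mpr ⟨Finset.mem_univ _,
      glue_isDyck' (show m+1 = a+b+1 by omega) hd1 hd2⟩
  · -- injectivity
    rintro ⟨⟨a, b⟩, p1, p2⟩ hx1 ⟨⟨a', b'⟩, p1', p2'⟩ hx2 heq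
    rw [Finset.mem_sigma, Finset.mem_product] at hx1 hx2
    dsimp only at hx1 hx2 heq ⊢
    have hab : a + b = m := Finset.HasAntidiagonal.mem_antidiagonal.mp hx1.1
    have hd1 : IsDyck a p1 := (Finset.mem_filter.mp hx1.2.1).2
    have hd2 : IsDyck b p2 := (Finset.mem_filter.mp hx1.2.2).2
    have hab' : a' + b' = m := Finset.HasAntidiagonal.mem_antidiagonal.mp hx2.1
    have hd1' : IsDyck a' p1' := (Finset.mem_filter.mp hx2.2.1).2
    have hd2' : IsDyck b' p2' := (Finset.mem_filter.mp hx2.2.2).2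
    have e1 := fa_glue (show m+1 = a+b+1 by omega) hd1 hd2
    have e2 := fa_glue (show m+1 = a'+b'+1 by omega) hd1' hd2'
    rw [heq] at e1
    have ha : a = a' := by omega
    subst ha
    have hb : b = b' := by omega
    subst hb
    have hp1 : p1 = p1' := by
      funext i
      have l1 := glue_stepAt_left (n := m+1) p1 p2 i (by have := i.isLt; omega)
      have l2 := glue_stepAt_left (n := m+1) p1' p2' i (by have := i.isLt; omega)
      rw [← l1, ← l2, heq]
    have hp2 : p2 = p2' := by
      funext i
      have l1 := glue_stepAt_right (n := m+1) p1 p2 i (by have := i.isLt; omega)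
      have l2 := glue_stepAt_right (n := m+1) p1' p2' i (by have := i.isLt; omega)
      rw [← l1, ← l2, heq]
    subst hp1
    subst hp2
    rfl
  · -- surjectivity
    intro p hp
    have hd : IsDyck (m+1) p := (Finset.mem_filter.mp hp).2
    have ham := (fa_spec hd).2.2
    refine ⟨⟨(fa p, m - fa p), (split1 (fa p) p, split2 (fa p) (m - fa p) p)⟩, ?_, ?_⟩
    · rw [Finset.mem_sigma, Finset.mem_product]
      exact ⟨Finset.HasAntidiagonal.mem_antidiagonal.mpr (show fa p + (m - fa p) = m by omega),
        Finset.mem_filter.mpr ⟨Finset.mem_univ _, split1_isDyck hd⟩,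
        Finset.mem_filter.mpr ⟨Finset.mem_univ _, split2_isDyck hd⟩⟩
    · exact glue_split hd
  · -- weights
    rintro ⟨ab, p1, p2⟩ hx
    dsimp only
    rw [Finset.mem_sigma, Finset.mem_product] at hx
    have hab : ab.1 + ab.2 = m := Finset.HasAntidiagonal.mem_antidiagonal.mp hx.1
    have hd1 : IsDyck ab.1 p1 := (Finset.mem_filter.mp hx.2.1).2
    have hd2 : IsDyck ab.2 p2 := (Finset.mem_filter.mp hx.2.2).2
    have hn : m+1 = ab.1+ab.2+1 := by omega
    have harea := area_glue' hn hd1 hd2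
    have hrk := rk_glue' hn hd1 hd2
    have hr1 : rk p1 ≤ ab.1 := by
      have h := Finset.card_filter_le (Finset.Icc 1 (ab.1-1))
        (fun i => stepAt p1 (2*i-1) = true)
      rw [Nat.card_Icc] at h
      rw [rk]
      omega
    have hrkg : rk (glue (m+1) ab.1 p1 p2) = (ab.1 - rk p1) + rk p2 := by omega
    have htp : t ^ ab.1 * t⁻¹ ^ rk p1 = t ^ (ab.1 - rk p1) := by
      have h2 : t ^ ((ab.1 - rk p1) + rk p1) = t ^ (ab.1 - rk p1) * t ^ rk p1 := pow_add t _ _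
      rw [show (ab.1 - rk p1) + rk p1 = ab.1 by omega] at h2
      rw [inv_pow, h2, mul_assoc, mul_inv_cancel₀ (pow_ne_zero _ ht), mul_one]
    calc (q*t)^ab.1 * (q ^ area p1 * t⁻¹ ^ rk p1) * (q ^ area p2 * t ^ rk p2)
        = (q^ab.1 * q^(area p1) * q^(area p2)) * ((t^ab.1 * t⁻¹^(rk p1)) * t^(rk p2)) := by
          rw [mul_pow]; ring
      _ = q ^ area (glue (m+1) ab.1 p1 p2) * t ^ rk (glue (m+1) ab.1 p1 p2) := by
          rw [htp, ← pow_add, ← pow_add, ← pow_add, harea, hrkg]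

/-- The ordinary generating function `D(q,t,z) = ∑_n D_n(q,t) z^n` satisfies
`D(q,t,z) = 1 + z · D(q,1/t,qtz) · D(q,t,z)`, where
`D(q,1/t,qtz) = ∑_n (qt)^n D_n(q,1/t) z^n`. -/
theorem generating_function_equation (q t : ℝ) (ht : t ≠ 0) :
    (PowerSeries.mk fun n => ∑ p ∈ dyckSet n, q ^ area p * t ^ rk p) =
      1 + PowerSeries.X *
        (PowerSeries.mk fun n =>
          (q * t) ^ n * ∑ p ∈ dyckSet n, q ^ area p * t⁻¹ ^ rk p) *
        (PowerSeries.mk fun n => ∑ p ∈ dyckSet n, q ^ area p * t ^ rk p) := by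
  ext n
  rw [map_add, PowerSeries.coeff_mk, mul_assoc]
  cases n with
  | zero =>
    rw [PowerSeries.coeff_zero_X_mul, PowerSeries.coeff_one, if_pos rfl, sum_dyck_zero]
    norm_num
  | succ m =>
    rw [PowerSeries.coeff_succ_X_mul, PowerSeries.coeff_one, if_neg (by omega),
      PowerSeries.coeff_mul, sum_dyck_succ q t ht m]
    rw [zero_add]
    refine Finset.sum_congr rfl fun ab _ => ?_
    rw [PowerSeries.coeff_mk, PowerSeries.coeff_mk]
end

section
/- The generating function F(t,z) = sum_{n≥0} (sum over Dyck paths p of order n of t^(rk(p))) z^n satisfies the algebraic equation t z F(t,z)^2 - (1 + z(t-1)) F(t,z) + 1 = 0; equivalently, F is the Narayana number generating function. -/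
open Finset

namespace NarAux

/-- ups at odd positions -/
def astat : List Bool → ℕ
  | [] => 0
  | [_] => 0
  | _ :: b :: l => (if b then 1 else 0) + astat l

/-- ups at even positions -/
def bstat : List Bool → ℕ
  | [] => 0
  | [a] => if a then 1 else 0
  | a :: _ :: l => (if a then 1 else 0) + bstat l

def DyckL (l : List Bool) : Prop :=
  l.count false = l.count true ∧ ∀ k, (l.take k).count false ≤ (l.take k).count true

lemma count_tf : ∀ l : List Bool, l.count true + l.count false = l.length := by
  intro l; induction l with
  | nil => simp
  | cons a l ih => cases a <;> simp [List.count_cons, ih] <;> omega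

lemma stat_sum : ∀ l : List Bool, astat l + bstat l = l.count true
  | [] => rfl
  | [a] => by cases a <;> simp [astat, bstat]
  | a :: b :: l => by
      have := stat_sum l
      cases a <;> cases b <;> simp [astat, bstat, List.count_cons] <;> omega

lemma astat_aux : ∀ (u : List Bool), u.length % 2 = 0 → ∀ (x : Bool) (v : List Bool),
    astat (x :: (u ++ false :: v)) = bstat u + astat v
  | [], _, x, v => by simp [astat, bstat]
  | [_], h, _, _ => by simp at h
  | a :: b :: u, h, x, v => by
      have ih := astat_aux u (by simp only [List.length_cons] at h; omega) b v
      show (if a then 1 else 0) + astat (b :: (u ++ false :: v)) = _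
      rw [ih]
      show _ = (if a then 1 else 0) + bstat u + astat v
      omega

lemma bstat_aux : ∀ (u : List Bool), u.length % 2 = 0 → ∀ (x : Bool) (v : List Bool),
    bstat (x :: (u ++ false :: v)) = (if x then 1 else 0) + (astat u + bstat v)
  | [], _, x, v => by simp [astat, bstat]
  | [_], h, _, _ => by simp at h
  | a :: b :: u, h, x, v => by
      have ih := bstat_aux u (by simp only [List.length_cons] at h; omega) b v
      show (if x then 1 else 0) + bstat (b :: (u ++ false :: v)) = _
      rw [ih]
      show _ = (if x then 1 else 0) + ((if b then 1 else 0) + astat u + bstat v)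
      omega

lemma DyckL_nil : DyckL [] := ⟨rfl, fun k => by simp⟩

lemma DyckL_combine {u v : List Bool} (hu : DyckL u) (hv : DyckL v) :
    DyckL (true :: u ++ false :: v) := by
  constructor
  · have h1 := hu.1; have h2 := hv.1
    simp only [List.cons_append, List.count_cons, List.count_append]
    simp
    omega
  · intro k
    cases k with
    | zero => simp
    | succ k =>
      have e1 : List.take (k+1) (true :: (u ++ false :: v))
          = true :: (List.take k u ++ List.take (k - u.length) (false :: v)) := by
        rw [List.take_succ_cons, List.take_append]
      show (List.take (k+1) (true :: (u ++ false :: v))).count false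
          ≤ (List.take (k+1) (true :: (u ++ false :: v))).count true
      rw [e1]
      simp only [List.count_cons, List.count_append]
      have h1 := hu.2 k
      cases hm : k - u.length with
      | zero =>
        simp only [hm, List.take_zero, List.count_nil]
        simp
        omega
      | succ m =>
        simp only [hm, List.take_succ_cons, List.count_cons]
        have h2 := hv.2 m
        simp
        omega

lemma head_true {l : List Bool} (h : DyckL l) (hne : l ≠ []) : ∃ m, l = true :: m := by
  cases l with
  | nil => exact absurd rfl hne
  | cons a m =>
    cases a
    · have h1 := h.2 1
      simp [List.count_cons] at h1
    · exact ⟨m, rfl⟩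

lemma last_false {l : List Bool} (h : DyckL l) {m : ℕ} (hm : l.length = m + 1) :
    l.getD m false = false := by
  by_contra hc
  have hml : m < l.length := by omega
  have hc' : l[m] = true := by
    rw [List.getD_eq_getElem l false hml] at hc
    simpa using hc
  have hsplit : l.take m ++ l[m] :: l.drop (m+1) = l := by
    rw [← List.drop_eq_getElem_cons hml, List.take_append_drop]
  have hd : l.drop (m+1) = [] := List.drop_eq_nil_of_le (by omega)
  rw [hd, hc'] at hsplit
  have hb := h.1
  have hnn := h.2 m
  have : (l.take m).count false = (l.take m).count true + 1 := by
    rw [← hsplit] at hb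
    simp [List.count_append, List.count_cons] at hb
    omega
  omega

lemma exists_decomp {l : List Bool} (h : DyckL l) (hne : l ≠ []) :
    ∃ u v, DyckL u ∧ DyckL v ∧ l = true :: u ++ false :: v := by
  classical
  have hlen : 1 ≤ l.length := by
    cases l with | nil => exact absurd rfl hne | cons a m => simp
  have hex : ∃ k, 1 ≤ k ∧ (l.take k).count false = (l.take k).count true :=
    ⟨l.length, hlen, by rw [List.take_of_length_le le_rfl]; exact h.1⟩
  obtain ⟨r, ⟨hr1, hrbal⟩, hmin⟩ : ∃ r, (1 ≤ r ∧
      (l.take r).count false = (l.take r).count true) ∧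
      ∀ m, m < r → ¬(1 ≤ m ∧ (l.take m).count false = (l.take m).count true) :=
    ⟨Nat.find hex, Nat.find_spec hex, fun m hm => Nat.find_min hex hm⟩
  have hrn : r ≤ l.length := by
    by_contra hc
    exact hmin l.length (by omega) ⟨hlen, by rw [List.take_of_length_le le_rfl]; exact h.1⟩
  have hstrict : ∀ m, 1 ≤ m → m < r → (l.take m).count false < (l.take m).count true := by
    intro m h1m hmr
    have h3 := hmin m hmr
    have h2 := h.2 m
    simp only [not_and] at h3
    have := h3 h1m
    omega
  obtain ⟨m0, hm0⟩ := head_true h hne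
  have hdrop1 : l.tail = m0 := by simp [hm0]
  have htk1 : ∀ k, l.take (k+1) = true :: l.tail.take k := by
    intro k
    conv_lhs => rw [hm0]
    rw [List.take_succ_cons, hdrop1]
  have hr2 : 2 ≤ r := by
    by_contra hc
    have hre : r = 1 := by omega
    rw [hre, hm0] at hrbal
    simp [List.count_cons] at hrbal
  have hr1lt : r - 1 < l.length := by omega
  have htks : l.take r = l.take (r-1) ++ [l[r-1]] := by
    conv_lhs => rw [show r = (r-1) + 1 by omega]
    rw [List.take_succ, List.getElem?_eq_getElem hr1lt]
    rfl
  have hstrict1 : (l.take (r-1)).count false < (l.take (r-1)).count true :=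
    hstrict (r-1) (by omega) (by omega)
  have hlast : l[r-1] = false := by
    by_contra hc
    have hc' : l[r-1] = true := by simpa using hc
    rw [htks, hc'] at hrbal
    simp [List.count_append] at hrbal
    omega
  have hexact : (l.take (r-1)).count false + 1 = (l.take (r-1)).count true := by
    rw [htks, hlast] at hrbal
    simp [List.count_append] at hrbal
    omega
  have htkr1 : l.take (r-1) = true :: l.tail.take (r-2) := by
    rw [show r - 1 = (r-2) + 1 by omega]; exact htk1 (r-2)
  rw [htkr1] at hexact hstrict1
  simp only [List.count_cons] at hexact hstrict1
  simp at hexact hstrict1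
  refine ⟨l.tail.take (r-2), l.drop r, ⟨?_, ?_⟩, ⟨?_, ?_⟩, ?_⟩
  · -- bal u
    omega
  · -- nonneg u
    intro k
    rw [List.take_take]
    rcases le_or_gt (r-2) k with hk | hk
    · rw [min_eq_right hk]
      omega
    · rw [min_eq_left (le_of_lt hk)]
      have h5 := hstrict (k+1) (by omega) (by omega)
      rw [htk1 k] at h5
      simp [List.count_cons] at h5
      omega
  · -- bal v
    have hsplit : l.take r ++ l.drop r = l := List.take_append_drop r l
    have hb := h.1
    rw [← hsplit] at hb
    simp only [List.count_append] at hb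
    rw [htks, hlast, htkr1] at hrbal
    simp [List.count_append, List.count_cons] at hrbal
    rw [htks, hlast, htkr1] at hb
    simp [List.count_append, List.count_cons] at hb
    omega
  · -- nonneg v
    intro k
    have h2 := h.2 (r + k)
    rw [List.take_add] at h2
    simp only [List.count_append] at h2
    omega
  · -- decomposition equation
    have h5 : List.drop (r-2) l.tail = false :: List.drop r l := by
      rw [← List.drop_one, List.drop_drop, show 1 + (r-2) = r-1 by omega,
        List.drop_eq_getElem_cons hr1lt, hlast, show r-1+1 = r by omega]
    have h6 : l.tail.take (r-2) ++ false :: List.drop r l = l.tail := by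
      rw [← h5, List.take_append_drop]
    calc l = true :: l.tail := by rw [← hdrop1] at hm0; exact hm0
    _ = _ := congrArg (true :: ·) h6.symm

lemma decomp_inj {u u' v v' : List Bool} (hu : DyckL u) (hu' : DyckL u')
    (he : true :: u ++ false :: v = true :: u' ++ false :: v') : u = u' ∧ v = v' := by
  have he' : u ++ false :: v = u' ++ false :: v' := by
    simpa using he
  have haux : ∀ (a b : List Bool) (w w' : List Bool), DyckL b →
      a ++ false :: w = b ++ false :: w' → a.count false = a.count true →
      ¬ a.length < b.length := by
    intro a b w w' hb heq hbal hlt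
    have htb : (b.take (a.length + 1)).count false ≤ (b.take (a.length + 1)).count true :=
      hb.2 _
    have h1 : (a ++ false :: w).take (a.length + 1) = a ++ [false] := by
      rw [List.take_append]
      simp
    have h2 : (b ++ false :: w').take (a.length + 1) = b.take (a.length + 1) := by
      rw [List.take_append]
      rw [show a.length + 1 - b.length = 0 by omega]
      simp
    rw [heq, h2] at h1
    rw [h1] at htb
    simp [List.count_append] at htb
    omega
  have hlen : u.length = u'.length := by
    rcases Nat.lt_trichotomy u.length u'.length with h1 | h1 | h1
    · exact absurd h1 (haux u u' v v' hu' he' hu.1)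
    · exact h1
    · exact absurd h1 (haux u' u v' v hu he'.symm hu'.1)
  obtain ⟨e1, e2⟩ := List.append_inj he' hlen
  exact ⟨e1, by simpa using e2⟩

lemma filter_succ_card {m : ℕ} (p : Fin m → Bool) (b : Bool) (k : ℕ) (hk : k < m) :
    (univ.filter fun i : Fin m => (i:ℕ) < k+1 ∧ p i = b).card
      = (univ.filter fun i : Fin m => (i:ℕ) < k ∧ p i = b).card
        + (if p ⟨k,hk⟩ = b then 1 else 0) := by
  classical
  have hpt : ∀ i : Fin m, (if ((i:ℕ) < k+1 ∧ p i = b) then (1:ℕ) else 0)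
      = (if ((i:ℕ) < k ∧ p i = b) then 1 else 0)
        + (if i = ⟨k,hk⟩ then (if p i = b then 1 else 0) else 0) := by
    intro i
    by_cases h2 : i = ⟨k,hk⟩
    · subst h2
      by_cases h1 : p ⟨k,hk⟩ = b <;> simp [h1]
    · have h3 : (i:ℕ) ≠ k := fun hik => h2 (Fin.ext hik)
      by_cases h1 : p i = b <;> simp [h1, h2] <;> split_ifs <;> omega
  rw [Finset.card_filter, Finset.card_filter]
  rw [Finset.sum_congr rfl (fun i _ => hpt i), Finset.sum_add_distrib]
  congr 1
  rw [Finset.sum_ite_eq' univ (⟨k,hk⟩ : Fin m) (fun i => if p i = b then 1 else 0)]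
  simp

lemma count_take_ofFn {m : ℕ} (p : Fin m → Bool) (b : Bool) (k : ℕ) :
    ((List.ofFn p).take k).count b
      = (univ.filter fun i : Fin m => (i:ℕ) < k ∧ p i = b).card := by
  induction k with
  | zero => simp
  | succ k ih =>
    rcases lt_or_ge k m with hk | hk
    · rw [List.take_succ, List.getElem?_eq_getElem (by simpa using hk)]
      rw [List.getElem_ofFn]
      rw [List.count_append, ih, filter_succ_card p b k hk]
      congr 1
      simp [List.count_singleton']
    · have h1 : (List.ofFn p).take (k+1) = (List.ofFn p).take k := by
        rw [List.take_of_length_le (by simp; omega), List.take_of_length_le (by simp; omega)]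
      rw [h1, ih]
      congr 1
      apply Finset.filter_congr
      intro i _
      have hi := i.isLt
      constructor
      · rintro ⟨h2, h3⟩; exact ⟨by omega, h3⟩
      · rintro ⟨h2, h3⟩; exact ⟨by omega, h3⟩

lemma count_take_true {n : ℕ} (p : Fin (2*n) → Bool) (k : ℕ) :
    ((List.ofFn p).take k).count true = upCount p k := count_take_ofFn p true k

lemma count_take_false {n : ℕ} (p : Fin (2*n) → Bool) (k : ℕ) :
    ((List.ofFn p).take k).count false = downCount p k := count_take_ofFn p false k

lemma isDyck_iff {n : ℕ} (p : Fin (2*n) → Bool) :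
    IsDyck n p ↔ DyckL (List.ofFn p) := by
  have hlen : (List.ofFn p).length = 2*n := by simp
  have htf := count_tf (List.ofFn p)
  have hfull : (List.ofFn p).take (2*n) = List.ofFn p :=
    List.take_of_length_le (le_of_eq hlen)
  constructor
  · rintro ⟨hbal, hnn⟩
    have h1 : (List.ofFn p).count true = n := by
      rw [← hfull, count_take_true]; exact hbal
    constructor
    · omega
    · intro k
      rcases le_or_gt k (2*n) with hk | hk
      · rw [count_take_true, count_take_false]
        exact hnn k (by omega)
      · rw [List.take_of_length_le (by omega)]
        omega
  · rintro ⟨hbal, hnn⟩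
    constructor
    · rw [← count_take_true p (2*n), hfull]; omega
    · intro k _
      rw [← count_take_true, ← count_take_false]
      exact hnn k

def Lset (n : ℕ) : Finset (List Bool) := (dyckSet n).image List.ofFn

lemma mem_Lset {n : ℕ} {l : List Bool} :
    l ∈ Lset n ↔ l.length = 2*n ∧ DyckL l := by
  constructor
  · intro hl
    obtain ⟨p, hp, rfl⟩ := Finset.mem_image.1 hl
    have hp' : IsDyck n p := (Finset.mem_filter.1 hp).2
    exact ⟨by simp, (isDyck_iff p).1 hp'⟩
  · rintro ⟨hlen, hd⟩
    set p : Fin (2*n) → Bool := fun i => l.getD i false with hpdef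
    have hofn : List.ofFn p = l := by
      apply List.ext_getElem (by simp [hlen])
      intro i h1 h2
      rw [List.getElem_ofFn]
      simp only [hpdef]
      rw [List.getD_eq_getElem l false h2]
    refine Finset.mem_image.2 ⟨p, Finset.mem_filter.2 ⟨Finset.mem_univ _, ?_⟩, hofn⟩
    rw [isDyck_iff, hofn]
    exact hd

lemma getD_ofFn {m : ℕ} (p : Fin m → Bool) (j : ℕ) :
    (List.ofFn p).getD j false = stepAt p j := by
  unfold stepAt
  split
  · next h =>
    rw [List.getD_eq_getElem _ _ (by simpa using h), List.getElem_ofFn]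
  · next h =>
    exact List.getD_eq_default _ _ (by simpa using Nat.le_of_not_lt h)

lemma astat_eq_sum : ∀ l : List Bool,
    astat l = ∑ i ∈ range ((l.length+1)/2), (if l.getD (2*i+1) false = true then 1 else 0)
  | [] => by simp [astat]
  | [a] => by simp [astat]
  | a :: b :: l => by
    have ih := astat_eq_sum l
    show (if b then 1 else 0) + astat l = _
    have hlen : ((a :: b :: l).length + 1)/2 = (l.length+1)/2 + 1 := by
      simp only [List.length_cons]; omega
    rw [hlen, Finset.sum_range_succ']
    have h0 : (if (a :: b :: l).getD (2*0+1) false = true then (1:ℕ) else 0)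
        = (if b then 1 else 0) := by
      norm_num [List.getD_cons_succ, List.getD_cons_zero]
    have h1 : ∀ i, (a :: b :: l).getD (2*(i+1)+1) false = l.getD (2*i+1) false := by
      intro i
      rw [show 2*(i+1)+1 = (2*i+1)+1+1 by ring]
      rw [List.getD_cons_succ, List.getD_cons_succ]
    simp only [h1]
    rw [ih, h0]
    omega

lemma rk_eq_astat {n : ℕ} {p : Fin (2*n) → Bool} (hp : IsDyck n p) :
    rk p = astat (List.ofFn p) := by
  have hd : DyckL (List.ofFn p) := (isDyck_iff p).1 hp
  cases n with
  | zero =>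
    have : List.ofFn p = [] := by
      have : (List.ofFn p).length = 0 := by simp
      exact List.eq_nil_of_length_eq_zero this
    rw [this]
    show rk p = 0
    unfold rk
    rfl
  | succ n =>
    rw [astat_eq_sum]
    have hlen : ((List.ofFn p).length + 1)/2 = (n+1) := by
      simp only [List.length_ofFn]
      omega
    rw [hlen, Finset.sum_range_succ]
    have hlast : (List.ofFn p).getD (2*n+1) false = false := by
      apply last_false hd
      simp only [List.length_ofFn]
      omega
    rw [hlast]
    simp only [Bool.false_eq_true, if_false, add_zero]
    unfold rk
    rw [Finset.card_filter]
    rw [show (n + 1 - 1) = n from rfl]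
    refine Finset.sum_nbij' (fun i => i - 1) (fun i => i + 1) ?_ ?_ ?_ ?_ ?_
    · intro a ha
      simp only [Finset.mem_Icc] at ha
      simp only [Finset.mem_range]
      omega
    · intro a ha
      simp only [Finset.mem_range] at ha
      simp only [Finset.mem_Icc]
      omega
    · intro a ha
      simp only [Finset.mem_Icc] at ha
      omega
    · intro a ha
      simp only [Finset.mem_range] at ha
      omega
    · intro a ha
      simp only [Finset.mem_Icc] at ha
      rw [getD_ofFn]
      rw [show 2*(a-1)+1 = 2*a-1 by omega]

lemma length_even_of_mem {n : ℕ} {l : List Bool} (h : l ∈ Lset n) : l.length % 2 = 0 := by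
  rw [mem_Lset] at h
  omega

lemma sum_split (f : List Bool → ℝ) (n : ℕ) :
    ∑ l ∈ Lset (n+1), f l
      = ∑ ij ∈ antidiagonal n, ∑ u ∈ Lset ij.1, ∑ v ∈ Lset ij.2,
          f (true :: u ++ false :: v) := by
  have hrw : ∀ ij : ℕ × ℕ, ∑ u ∈ Lset ij.1, ∑ v ∈ Lset ij.2, f (true :: u ++ false :: v)
      = ∑ x ∈ Lset ij.1 ×ˢ Lset ij.2, f (true :: x.1 ++ false :: x.2) := by
    intro ij
    rw [Finset.sum_product]
  rw [Finset.sum_congr rfl (fun ij _ => hrw ij)]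
  rw [← Finset.sum_sigma (antidiagonal n) (fun ij => Lset ij.1 ×ˢ Lset ij.2)
    (fun x => f (true :: x.2.1 ++ false :: x.2.2))]
  symm
  apply Finset.sum_bij (i := fun x _ => true :: x.2.1 ++ false :: x.2.2)
  · rintro ⟨⟨i, j⟩, u, v⟩ hx
    simp only [Finset.mem_sigma, Finset.HasAntidiagonal.mem_antidiagonal, Finset.mem_product] at hx
    obtain ⟨hij, hu, hv⟩ := hx
    have hu' := mem_Lset.1 hu
    have hv' := mem_Lset.1 hv
    apply mem_Lset.2
    constructor
    · simp only [List.length_cons, List.length_append, List.length_cons]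
      omega
    · exact DyckL_combine hu'.2 hv'.2
  · rintro ⟨⟨i1, j1⟩, u1, v1⟩ hx1 ⟨⟨i2, j2⟩, u2, v2⟩ hx2 he
    simp only [Finset.mem_sigma, Finset.HasAntidiagonal.mem_antidiagonal, Finset.mem_product] at hx1 hx2
    obtain ⟨hij1, hu1, hv1⟩ := hx1
    obtain ⟨hij2, hu2, hv2⟩ := hx2
    have hu1' := mem_Lset.1 hu1
    have hu2' := mem_Lset.1 hu2
    obtain ⟨e1, e2⟩ := decomp_inj hu1'.2 hu2'.2 he
    have : i1 = i2 := by
      have l1 := hu1'.1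
      have l2 := hu2'.1
      rw [e1] at l1
      omega
    have : j1 = j2 := by omega
    subst e1; subst e2
    simp_all
  · intro b hb
    have hb' := mem_Lset.1 hb
    have hne : b ≠ [] := by
      intro hc
      rw [hc] at hb'
      simp at hb'
    obtain ⟨u, v, hu, hv, he⟩ := exists_decomp hb'.2 hne
    have hul : u.length % 2 = 0 := by
      have h1 := count_tf u
      have h2 := hu.1
      omega
    have hvl : v.length % 2 = 0 := by
      have h1 := count_tf v
      have h2 := hv.1
      omega
    have hlen : u.length + v.length + 2 = 2 * (n+1) := by
      have := hb'.1
      rw [he] at this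
      simp only [List.length_cons, List.length_append, List.length_cons] at this
      omega
    refine ⟨⟨(u.length / 2, v.length / 2), u, v⟩, ?_, he.symm⟩
    simp only [Finset.mem_sigma, Finset.HasAntidiagonal.mem_antidiagonal, Finset.mem_product]
    refine ⟨by omega, mem_Lset.2 ⟨by omega, hu⟩, mem_Lset.2 ⟨by omega, hv⟩⟩
  · intro a ha
    rfl

noncomputable def Aval (t : ℝ) (n : ℕ) : ℝ := ∑ l ∈ Lset n, t ^ astat l
noncomputable def Bval (t : ℝ) (n : ℕ) : ℝ := ∑ l ∈ Lset n, t ^ bstat l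

lemma Lset_zero : Lset 0 = {([] : List Bool)} := by
  ext l
  rw [mem_Lset]
  simp only [Finset.mem_singleton]
  constructor
  · rintro ⟨h1, _⟩
    exact List.eq_nil_of_length_eq_zero (by omega)
  · rintro rfl
    refine ⟨by simp, ⟨rfl, fun k => by simp⟩⟩

lemma Aval_zero (t : ℝ) : Aval t 0 = 1 := by
  rw [Aval, Lset_zero]
  simp [astat]

lemma Bval_zero (t : ℝ) : Bval t 0 = 1 := by
  rw [Bval, Lset_zero]
  simp [bstat]

lemma Aval_rec (t : ℝ) (n : ℕ) :
    Aval t (n+1) = ∑ ij ∈ antidiagonal n, Bval t ij.1 * Aval t ij.2 := by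
  rw [Aval, sum_split]
  refine Finset.sum_congr rfl (fun ij _ => ?_)
  rw [Bval, Aval, Finset.sum_mul_sum]
  refine Finset.sum_congr rfl (fun u hu => ?_)
  refine Finset.sum_congr rfl (fun v hv => ?_)
  rw [List.cons_append, astat_aux u (length_even_of_mem hu) true v, pow_add]

lemma Bval_rec (t : ℝ) (n : ℕ) :
    Bval t (n+1) = t * ∑ ij ∈ antidiagonal n, Aval t ij.1 * Bval t ij.2 := by
  rw [Bval, sum_split, Finset.mul_sum]
  refine Finset.sum_congr rfl (fun ij _ => ?_)
  rw [Aval, Bval, Finset.sum_mul_sum, Finset.mul_sum]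
  refine Finset.sum_congr rfl (fun u hu => ?_)
  rw [Finset.mul_sum]
  refine Finset.sum_congr rfl (fun v hv => ?_)
  rw [List.cons_append, bstat_aux u (length_even_of_mem hu) true v]
  have h9 : (if true then 1 else 0) + (astat u + bstat v) = astat u + bstat v + 1 := by
    simp; omega
  rw [h9, pow_succ, pow_add]
  ring

lemma Bval_succ (t : ℝ) (n : ℕ) : Bval t (n+1) = t * Aval t (n+1) := by
  rw [Bval_rec, Aval_rec]
  congr 1
  rw [← Finset.Nat.sum_antidiagonal_swap]
  refine Finset.sum_congr rfl (fun ij hij => ?_)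
  simp only [Prod.fst_swap, Prod.snd_swap]
  ring

lemma key (t : ℝ) (n : ℕ) :
    t * ∑ ij ∈ antidiagonal n, Aval t ij.1 * Aval t ij.2
      = Aval t (n+1) + (t - 1) * Aval t n := by
  rw [Aval_rec]
  rw [Finset.Nat.sum_antidiagonal_eq_sum_range_succ_mk, Finset.Nat.sum_antidiagonal_eq_sum_range_succ_mk]
  rw [Finset.sum_range_succ', Finset.sum_range_succ']
  simp only [Bval_succ, Aval_zero, Bval_zero, Nat.sub_zero, one_mul]
  rw [mul_add, Finset.mul_sum]
  rw [Finset.sum_congr rfl (fun k _ => by ring :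
    ∀ k ∈ range n, t * (Aval t (k+1) * Aval t (n - (k+1))) = t * Aval t (k+1) * Aval t (n - (k+1)))]
  ring


def sum_dyck_eq_aux : True := trivial

lemma sum_dyck_eq (t : ℝ) (n : ℕ) : (∑ p ∈ dyckSet n, t ^ rk p) = Aval t n := by
  rw [Aval, Lset, Finset.sum_image (fun x _ y _ h => List.ofFn_injective h)]
  exact Finset.sum_congr rfl (fun p hp => by rw [rk_eq_astat (Finset.mem_filter.1 hp).2])

end NarAux

/-- The rank generating function `F(t,z) = ∑_n (∑_{p ∈ Dyck(n)} t^rk(p)) z^n`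
(the Narayana number generating function) satisfies the algebraic equation
`t z F² - (1 + z(t-1)) F + 1 = 0`. -/
theorem narayana_algebraic_equation (t : ℝ) (F : PowerSeries ℝ)
    (hF : F = PowerSeries.mk fun n => ∑ p ∈ dyckSet n, t ^ rk p) :
    PowerSeries.C t * PowerSeries.X * F ^ 2
      - (1 + PowerSeries.X * PowerSeries.C (t - 1)) * F + 1 = 0 := by
  have hA : ∀ k, (∑ p ∈ dyckSet k, t ^ rk p) = NarAux.Aval t k := NarAux.sum_dyck_eq t
  subst hF
  set F := PowerSeries.mk fun n => ∑ p ∈ dyckSet n, t ^ rk p with hFdef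
  have hFc : ∀ k, (PowerSeries.coeff k) F = NarAux.Aval t k := by
    intro k
    rw [hFdef, PowerSeries.coeff_mk]
    exact hA k
  apply PowerSeries.ext
  intro n
  rw [map_add, map_sub, map_zero, PowerSeries.coeff_one]
  cases n with
  | zero =>
    simp only [PowerSeries.coeff_zero_eq_constantCoeff, map_mul, map_add, map_one,
      PowerSeries.constantCoeff_X, PowerSeries.constantCoeff_C]
    have h0 : (PowerSeries.constantCoeff) F = 1 := by
      rw [← PowerSeries.coeff_zero_eq_constantCoeff, hFc, NarAux.Aval_zero]
    rw [h0]
    norm_num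
  | succ n =>
    have e1 : (PowerSeries.coeff (n+1)) (PowerSeries.C t * PowerSeries.X * F ^ 2)
        = t * ∑ ij ∈ antidiagonal n, NarAux.Aval t ij.1 * NarAux.Aval t ij.2 := by
      rw [mul_assoc, PowerSeries.coeff_C_mul, PowerSeries.coeff_succ_X_mul, sq,
        PowerSeries.coeff_mul]
      congr 1
      exact Finset.sum_congr rfl (fun ij _ => by rw [hFc, hFc])
    have e2 : (PowerSeries.coeff (n+1)) ((1 + PowerSeries.X * PowerSeries.C (t - 1)) * F)
        = NarAux.Aval t (n+1) + (t - 1) * NarAux.Aval t n := by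
      rw [add_mul, one_mul, map_add, hFc, mul_assoc, PowerSeries.coeff_succ_X_mul,
        PowerSeries.coeff_C_mul, hFc]
    rw [e1, e2, NarAux.key t n]
    simp
end

section
/- For every permutation σ in the interval [e, (1 2 ... n)] of the absolute order on the symmetric group S_n, the reflection length of σ equals its excedance number: ℓ'(σ) = |{i : σ(i) > i}|. -/
open Finset

/-- The reflection length of a permutation: the minimum number of
transpositions with product `σ`, which equals `n` minus the number of cycles
of `σ`, i.e. the sum over nontrivial cycles of (length − 1). -/
def reflLen {n : ℕ} (σ : Equiv.Perm (Fin n)) : ℕ :=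
  σ.cycleType.sum - σ.cycleType.card

/-- The excedance number is at most the reflection length. -/
lemma exc_le_reflLen {n : ℕ} (σ : Equiv.Perm (Fin n)) :
    (Finset.univ.filter fun i : Fin n => i < σ i).card ≤ reflLen σ := by
  classical
  set E := Finset.univ.filter fun i : Fin n => i < σ i with hE
  -- E is covered by the (pairwise disjoint) supports of the cycles of σ
  have hsub : E ⊆ σ.cycleFactorsFinset.biUnion (fun c => E ∩ c.support) := by
    intro i hi
    have hlt : i < σ i := by simpa [hE] using hi
    have hisupp : i ∈ σ.support := Equiv.Perm.mem_support.mpr (fun he => by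
      rw [he] at hlt; exact lt_irrefl _ hlt)
    rw [mem_biUnion]
    refine ⟨σ.cycleOf i, ?_, mem_inter.mpr ⟨hi, ?_⟩⟩
    · exact Equiv.Perm.cycleOf_mem_cycleFactorsFinset_iff.mpr hisupp
    · exact Equiv.Perm.mem_support_cycleOf_iff.mpr ⟨Equiv.Perm.SameCycle.refl _ _, hisupp⟩
  have hdisj : (σ.cycleFactorsFinset : Set (Equiv.Perm (Fin n))).Pairwise
      (fun c d => Disjoint (E ∩ c.support) (E ∩ d.support)) := by
    intro c hc d hd hcd
    have := (Equiv.Perm.cycleFactorsFinset_pairwise_disjoint σ hc hd hcd).disjoint_support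
    exact (Finset.disjoint_of_subset_left (inter_subset_right)
      (Finset.disjoint_of_subset_right (inter_subset_right) this))
  have hcard : E.card ≤ ∑ c ∈ σ.cycleFactorsFinset, (E ∩ c.support).card := by
    calc E.card ≤ (σ.cycleFactorsFinset.biUnion (fun c => E ∩ c.support)).card :=
          Finset.card_le_card hsub
      _ = ∑ c ∈ σ.cycleFactorsFinset, (E ∩ c.support).card :=
          Finset.card_biUnion (fun c hc d hd hcd => hdisj hc hd hcd)
  -- bound each term: the maximum of a cycle's support is not an excedance
  have hterm : ∀ c ∈ σ.cycleFactorsFinset, (E ∩ c.support).card ≤ c.support.card - 1 := by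
    intro c hc
    have hcyc : c.IsCycle := (Equiv.Perm.mem_cycleFactorsFinset_iff.mp hc).1
    have hne : c.support.Nonempty :=
      Finset.card_pos.mp (by have := hcyc.two_le_card_support; omega)
    set m := c.support.max' hne with hm
    have hmmem : m ∈ c.support := c.support.max'_mem hne
    have hcm : c = σ.cycleOf m := Equiv.Perm.cycle_is_cycleOf hmmem hc
    have hσm : σ m = c m := by
      rw [hcm, Equiv.Perm.cycleOf_apply_self]
    have hmE : m ∉ E := by
      simp only [hE, mem_filter, mem_univ, true_and]
      intro hlt
      have : σ m ∈ c.support := by rw [hσm]; exact Equiv.Perm.apply_mem_support.mpr hmmem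
      exact absurd (c.support.le_max' _ this) (not_le.mpr hlt)
    have hsub2 : E ∩ c.support ⊆ c.support.erase m := by
      intro x hx
      rw [mem_erase]
      exact ⟨fun hxm => hmE (hxm ▸ (mem_inter.mp hx).1), (mem_inter.mp hx).2⟩
    calc (E ∩ c.support).card ≤ (c.support.erase m).card := Finset.card_le_card hsub2
      _ = c.support.card - 1 := Finset.card_erase_of_mem hmmem
  -- sum up
  have hsum : ∑ c ∈ σ.cycleFactorsFinset, (c.support.card - 1) + σ.cycleType.card
      = σ.cycleType.sum := by
    have h1 : σ.cycleType.card = σ.cycleFactorsFinset.card := by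
      rw [Equiv.Perm.cycleType_def, Multiset.card_map]; rfl
    have h2 : σ.cycleType.sum = ∑ c ∈ σ.cycleFactorsFinset, c.support.card := rfl
    rw [h1, h2, Finset.card_eq_sum_ones σ.cycleFactorsFinset, ← Finset.sum_add_distrib]
    refine Finset.sum_congr rfl fun c hc => ?_
    have hcyc : c.IsCycle := (Equiv.Perm.mem_cycleFactorsFinset_iff.mp hc).1
    have := hcyc.two_le_card_support
    omega
  have : E.card ≤ ∑ c ∈ σ.cycleFactorsFinset, (c.support.card - 1) :=
    le_trans hcard (Finset.sum_le_sum hterm)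
  unfold reflLen
  omega

/-- Excedances are subadditive. -/
lemma exc_mul_le {n : ℕ} (σ τ : Equiv.Perm (Fin n)) :
    (Finset.univ.filter fun i : Fin n => i < (σ * τ) i).card ≤
      (Finset.univ.filter fun i : Fin n => i < σ i).card +
      (Finset.univ.filter fun i : Fin n => i < τ i).card := by
  classical
  set Eσ := Finset.univ.filter fun i : Fin n => i < σ i
  set Eτ := Finset.univ.filter fun i : Fin n => i < τ i
  have hsub : (Finset.univ.filter fun i : Fin n => i < (σ * τ) i) ⊆
      Eτ ∪ Eσ.image τ.symm := by
    intro i hi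
    have hlt : i < σ (τ i) := (Finset.mem_filter.mp hi).2
    rw [mem_union]
    by_cases hτ : i < τ i
    · left; simp [Eτ, hτ]
    · right
      rw [mem_image]
      refine ⟨τ i, ?_, Equiv.symm_apply_apply _ _⟩
      have : τ i < σ (τ i) := lt_of_le_of_lt (not_lt.mp hτ) hlt
      simp [Eσ, this]
  calc (Finset.univ.filter fun i : Fin n => i < (σ * τ) i).card
      ≤ (Eτ ∪ Eσ.image τ.symm).card := Finset.card_le_card hsub
    _ ≤ Eτ.card + (Eσ.image τ.symm).card := Finset.card_union_le _ _
    _ = Eσ.card + Eτ.card := by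
        rw [Finset.card_image_of_injective _ (Equiv.injective _)]; omega

/-- For every `σ` in the interval `[e, (1 2 ⋯ n)]` of the absolute order on
`S_n` (i.e. `ℓ'(σ) + ℓ'(σ⁻¹ c) = ℓ'(c)` for the long cycle `c = finRotate n`),
the reflection length of `σ` equals its excedance number. -/
theorem reflection_length_eq_excedance (n : ℕ) (σ : Equiv.Perm (Fin n))
    (h : reflLen σ + reflLen (σ⁻¹ * finRotate n) = reflLen (finRotate n)) :
    reflLen σ = (Finset.univ.filter fun i : Fin n => i < σ i).card := by
  classical
  match n, σ, h with
  | 0, σ, h => simp [Subsingleton.elim σ 1, reflLen, Equiv.Perm.cycleType_one]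
  | 1, σ, h =>
    have : σ = 1 := Subsingleton.elim σ 1
    subst this
    simp [reflLen, Equiv.Perm.cycleType_one]
  | (m + 2), σ, h =>
    -- compute reflLen and excedance of the long cycle
    have hcycType : (finRotate (m + 2)).cycleType = {m + 2} := by
      rw [Equiv.Perm.IsCycle.cycleType isCycle_finRotate, support_finRotate]
      simp
    have hreflc : reflLen (finRotate (m + 2)) = m + 1 := by
      rw [reflLen, hcycType]; simp
    have hexcc : (Finset.univ.filter fun i : Fin (m + 2) =>
        i < finRotate (m + 2) i).card = m + 1 := by
      have heq : (Finset.univ.filter fun i : Fin (m + 2) => i < finRotate (m + 2) i)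
          = Finset.univ.erase (Fin.last (m + 1)) := by
        ext i
        simp only [mem_filter, mem_univ, true_and, mem_erase, and_true]
        rw [finRotate_succ_apply]
        constructor
        · intro hlt hi
          subst hi
          rw [Fin.lt_iff_val_lt_val] at hlt
          simp [Fin.val_add_one] at hlt
        · intro hi
          rw [Fin.lt_iff_val_lt_val, Fin.val_add_one]
          simp [hi]
      rw [heq, Finset.card_erase_of_mem (mem_univ _)]
      simp
    -- inequalities
    have h1 := exc_le_reflLen σ
    have h2 := exc_le_reflLen (σ⁻¹ * finRotate (m + 2))
    have h3 := exc_mul_le σ (σ⁻¹ * finRotate (m + 2))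
    rw [show σ * (σ⁻¹ * finRotate (m + 2)) = finRotate (m + 2) by group] at h3
    rw [hexcc] at h3
    rw [hreflc] at h
    omega
end
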